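/- Let F : ℝⁿ → ℝ be convex. Then x ≥ 0 (componentwise) minimizes F over the nonnegative orthant if and only if there exists μ ∈ ℝⁿ such that -μ ∈ ∂F(x) and μ = min(μ + c x, 0) componentwise, for any fixed c > 0. -/

import Mathlib

theorem kkt_nonneg_orthant (n : ℕ) (F : (Fin n → ℝ) → ℝ)
    (hF : ConvexOn ℝ Set.univ F) (c : ℝ) (hc : 0 < c)
    (x : Fin n → ℝ) (hx : ∀ i, 0 ≤ x i) :
    (∀ y : Fin n → ℝ, (∀ i, 0 ≤ y i) → F x ≤ F y) ↔
      ∃ mu : Fin n → ℝ,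
        (∀ y : Fin n → ℝ, F x + ∑ i, (-mu i) * (y i - x i) ≤ F y) ∧
        (∀ i, mu i = min (mu i + c * x i) 0) := by
  constructor
  · intro hmin
    -- F is continuous
    have hcont : Continuous F := by
      have h := hF.continuousOn isOpen_univ
      exact continuousOn_univ.1 h
    set A : Set ((Fin n → ℝ) × ℝ) := {p | F p.1 < p.2} with hA
    set B : Set ((Fin n → ℝ) × ℝ) := {p | (∀ i, 0 ≤ p.1 i) ∧ p.2 ≤ F x} with hB
    have hAopen : IsOpen A :=
      isOpen_lt (hcont.comp continuous_fst) continuous_snd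
    have hAconv : Convex ℝ A := by
      intro p hp q hq s t hs ht hst
      simp only [hA, Set.mem_setOf_eq] at *
      have h1 : F (s • p + t • q).1 ≤ s * F p.1 + t * F q.1 := by
        have := hF.2 (Set.mem_univ p.1) (Set.mem_univ q.1) hs ht hst
        simpa using this
      have h2 : s * F p.1 + t * F q.1 < s * p.2 + t * q.2 := by
        rcases hs.lt_or_eq with hs' | hs'
        · have := mul_lt_mul_of_pos_left hp hs'
          have := mul_le_mul_of_nonneg_left hq.le ht
          linarith
        · have hs0 : s = 0 := hs'.symm
          have ht1 : t = 1 := by linarith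
          have := mul_lt_mul_of_pos_left hq (by rw [ht1]; norm_num : (0:ℝ) < t)
          simp [hs0]
          linarith
      calc F (s • p + t • q).1 ≤ s * F p.1 + t * F q.1 := h1
        _ < s * p.2 + t * q.2 := h2
        _ = (s • p + t • q).2 := by simp
    have hBconv : Convex ℝ B := by
      intro p hp q hq s t hs ht hst
      refine ⟨fun i => ?_, ?_⟩
      · have := hp.1 i; have := hq.1 i
        have h1 : 0 ≤ s * p.1 i := mul_nonneg hs ‹0 ≤ p.1 i›
        have h2 : 0 ≤ t * q.1 i := mul_nonneg ht ‹0 ≤ q.1 i›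
        simpa using add_nonneg h1 h2
      · have h1 : s * p.2 ≤ s * F x := mul_le_mul_of_nonneg_left hp.2 hs
        have h2 : t * q.2 ≤ t * F x := mul_le_mul_of_nonneg_left hq.2 ht
        have : s * p.2 + t * q.2 ≤ (s + t) * F x := by rw [add_mul]; linarith
        simpa [hst] using this
    have hdisj : Disjoint A B := by
      rw [Set.disjoint_left]
      rintro p hpA ⟨hp1, hp2⟩
      exact absurd (hpA.trans_le (hp2.trans (hmin p.1 hp1))) (lt_irrefl _)
    obtain ⟨f, u, hfA, hfB⟩ := geometric_hahn_banach_open hAconv hAopen hBconv hdisj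
    set a : Fin n → ℝ := fun i => f ((Pi.single i 1 : Fin n → ℝ), (0:ℝ)) with ha
    set β : ℝ := f ((0 : Fin n → ℝ), (1:ℝ)) with hβ
    -- linearity decomposition
    have hf : ∀ (y : Fin n → ℝ) (t : ℝ),
        f (y, t) = (∑ i, y i * a i) + t * β := by
      intro y t
      have h1 : ((y, t) : (Fin n → ℝ) × ℝ)
          = (∑ i, y i • (((Pi.single i 1 : Fin n → ℝ), (0:ℝ)))) + t • ((0 : Fin n → ℝ), (1:ℝ)) := by
        rw [Prod.ext_iff]
        constructor
        · simp only [Prod.fst_sum, Prod.fst_add, Prod.smul_fst, Prod.snd_add]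
          funext j
          simp [Finset.sum_apply, Pi.single_apply]
        · simp [Prod.snd_sum]
      rw [h1]
      rw [map_add, map_sum, map_smul]
      simp only [map_smul, smul_eq_mul]
      rfl
    -- β is negative
    have hβneg : β < 0 := by
      have h1 : ((x, F x + 1) : (Fin n → ℝ) × ℝ) ∈ A := by
        simp [hA]
      have h2 : ((x, F x) : (Fin n → ℝ) × ℝ) ∈ B := ⟨hx, le_refl _⟩
      have := hfA _ h1
      have := hfB _ h2
      rw [hf] at *
      linarith
    -- epigraph side: limiting inequality
    have hsub : ∀ y : Fin n → ℝ, (∑ i, y i * a i) + F y * β ≤ u := by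
      intro y
      by_contra h
      push_neg at h
      set L := (∑ i, y i * a i) + F y * β with hL
      have hε : 0 < (L - u) / (-β) := div_pos (by linarith) (by linarith)
      have hmem : ((y, F y + (L - u) / (-β)) : (Fin n → ℝ) × ℝ) ∈ A := by
        simp only [hA, Set.mem_setOf_eq]
        linarith
      have := hfA _ hmem
      rw [hf] at this
      have hβne : β ≠ 0 := ne_of_lt hβneg
      have hcalc : (L - u) / (-β) * β = -(L - u) := by
        rw [div_neg, neg_mul, div_mul_cancel₀ _ hβne]
      nlinarith [this, hcalc]
    have hBside : ∀ y : Fin n → ℝ, (∀ i, 0 ≤ y i) →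
        u ≤ (∑ i, y i * a i) + F x * β := by
      intro y hy
      have := hfB (y, F x) ⟨hy, le_refl _⟩
      rwa [hf] at this
    have hu : u = (∑ i, x i * a i) + F x * β :=
      le_antisymm (hBside x hx) (hsub x)
    -- the multiplier
    refine ⟨fun i => a i / β, ?_, ?_⟩
    · intro y
      have hpos : (0:ℝ) < -β := by linarith
      have key : ∑ i, a i * (y i - x i) ≤ (F y - F x) * (-β) := by
        have h1 := hsub y
        rw [hu] at h1
        have h2 : ∑ i, a i * (y i - x i) = (∑ i, y i * a i) - (∑ i, x i * a i) := by
          rw [← Finset.sum_sub_distrib]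
          apply Finset.sum_congr rfl
          intro i _
          ring
        rw [h2]
        nlinarith
      have h3 : ∑ i, (-(a i / β)) * (y i - x i)
          = (∑ i, a i * (y i - x i)) / (-β) := by
        rw [Finset.sum_div]
        apply Finset.sum_congr rfl
        intro i _
        rw [div_neg, neg_mul, div_mul_eq_mul_div]
      rw [h3]
      have h4 : (∑ i, a i * (y i - x i)) / (-β) ≤ F y - F x :=
        (div_le_iff₀ hpos).2 key
      linarith
    · -- sign and complementarity
      have hanneg : ∀ i, 0 ≤ a i := by
        intro i
        have hy : ∀ j, 0 ≤ (x + Pi.single i (1:ℝ) : Fin n → ℝ) j := by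
          intro j
          have := hx j
          simp only [Pi.add_apply, Pi.single_apply]
          split <;> linarith
        have h1 := hBside _ hy
        rw [hu] at h1
        have h2 : ∑ j, (x + Pi.single i (1:ℝ) : Fin n → ℝ) j * a j
            = (∑ j, x j * a j) + a i := by
          simp only [Pi.add_apply, add_mul]
          rw [Finset.sum_add_distrib]
          congr 1
          rw [Finset.sum_eq_single i]
          · simp
          · intro j _ hj; simp [Pi.single_apply, hj]
          · intro h; exact absurd (Finset.mem_univ i) h
        rw [h2] at h1
        linarith
      have hcompl : ∀ i, x i * a i = 0 := by
        intro i
        have hy : ∀ j, 0 ≤ Function.update x i 0 j := by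
          intro j
          rcases eq_or_ne j i with rfl | hj
          · simp
          · simp [Function.update_apply, hj, hx j]
        have h1 := hBside _ hy
        rw [hu] at h1
        have h2 : ∑ j, Function.update x i 0 j * a j
            = (∑ j, x j * a j) - x i * a i := by
          have : ∀ j, Function.update x i 0 j * a j
              = x j * a j - (if j = i then x i * a i else 0) := by
            intro j
            rcases eq_or_ne j i with rfl | hj
            · simp
            · simp [Function.update_apply, hj]
          simp_rw [this]
          rw [Finset.sum_sub_distrib, Finset.sum_ite_eq' Finset.univ i]
          simp
        rw [h2] at h1
        have hle : x i * a i ≤ 0 := by linarith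
        exact le_antisymm hle (mul_nonneg (hx i) (hanneg i))
      intro i
      show a i / β = min (a i / β + c * x i) 0
      have hmule : a i / β ≤ 0 := div_nonpos_of_nonneg_of_nonpos (hanneg i) hβneg.le
      rcases mul_eq_zero.1 (hcompl i) with hxi | hai
      ·
        rw [hxi]
        simp [min_eq_left hmule]
      · rw [hai]
        simp only [zero_div, zero_add]
        rw [min_eq_right (mul_nonneg hc.le (hx i))]
  · rintro ⟨mu, hsub, hm⟩ y hy
    have h1 : ∀ i, mu i ≤ 0 := by
      intro i
      rw [hm i]
      exact min_le_right _ _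
    have h2 : ∀ i, mu i * x i = 0 := by
      intro i
      rcases le_or_gt (mu i + c * x i) 0 with h | h
      · have := hm i
        rw [min_eq_left h] at this
        have hcx : c * x i = 0 := by linarith
        have hxi : x i = 0 := by
          rcases mul_eq_zero.1 hcx with h' | h'
          · exact absurd h' hc.ne'
          · exact h'
        simp [hxi]
      · have := hm i
        rw [min_eq_right h.le] at this
        simp [this]
    have hterm : ∀ i ∈ Finset.univ, (0:ℝ) ≤ (-mu i) * (y i - x i) := by
      intro i _
      nlinarith [mul_nonneg (neg_nonneg.2 (h1 i)) (hy i), h2 i]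
    have hsum := Finset.sum_nonneg hterm
    have := hsub y
    linarith
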